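/- Let Γ ≥ 1 and let μ be a positive measure on ℝ^Q with ∫ (1+|ξ|)^{-(Q+Γ)} dμ(ξ) < ∞. Define I(x,a) = (a^{Γ-1}/(1+a+|x|)^{Q+Γ}) ∫_{|ξ| ≤ |x|/2} (a + |x − ξ|)^{-(Q+Γ)} dμ(ξ) on the region E = {(x,a) : |x| ≥ 1 or a ≥ 1}. Then I(x,a) ≤ C (1/a) · a^Γ/(1+a+|x|)^{Q+Γ} on E for a constant C depending only on μ, Q, Γ; in particular, I restricted to E belongs to weak-L¹(dx da). -/

import Mathlib

open MeasureTheory Metric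

noncomputable section

/-- The term `I(x,a)` in the proof of the global weak-L¹ estimate. -/
def termI (Q : ℕ) (Γ : ℝ) (μ : Measure (EuclideanSpace ℝ (Fin Q)))
    (x : EuclideanSpace ℝ (Fin Q)) (a : ℝ) : ℝ :=
  (a ^ (Γ - 1) / (1 + a + ‖x‖) ^ ((Q : ℝ) + Γ)) *
    (∫⁻ ξ in {ξ : EuclideanSpace ℝ (Fin Q) | ‖ξ‖ ≤ ‖x‖ / 2},
      ENNReal.ofReal ((a + ‖x - ξ‖) ^ (-((Q : ℝ) + Γ))) ∂μ).toReal

theorem termI_estimate (Q : ℕ) (hQ : 1 ≤ Q) (Γ : ℝ) (hΓ : 1 ≤ Γ)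
    (μ : Measure (EuclideanSpace ℝ (Fin Q)))
    (hμ : ∫⁻ ξ, ENNReal.ofReal ((1 + ‖ξ‖) ^ (-((Q : ℝ) + Γ))) ∂μ < ⊤) :
    (∃ C : ℝ, ∀ (x : EuclideanSpace ℝ (Fin Q)) (a : ℝ), 0 < a →
        (1 ≤ ‖x‖ ∨ 1 ≤ a) →
        termI Q Γ μ x a ≤
          C * ((1 / a) * (a ^ Γ / (1 + a + ‖x‖) ^ ((Q : ℝ) + Γ)))) ∧
    (∃ C' : ℝ, ∀ α : ℝ, 0 < α →
        volume {p : EuclideanSpace ℝ (Fin Q) × ℝ |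
            0 < p.2 ∧ (1 ≤ ‖p.1‖ ∨ 1 ≤ p.2) ∧ α < termI Q Γ μ p.1 p.2} ≤
          ENNReal.ofReal (C' / α)) := by
  have hQ1 : (1:ℝ) ≤ (Q:ℝ) := by exact_mod_cast hQ
  have hp : (0:ℝ) < (Q:ℝ) + Γ := by linarith
  set M := ∫⁻ ξ, ENNReal.ofReal ((1 + ‖ξ‖) ^ (-((Q : ℝ) + Γ))) ∂μ with hM_def
  have hM : M ≠ ⊤ := hμ.ne
  set K : ℝ := (4:ℝ) ^ ((Q:ℝ) + Γ) * M.toReal with hK_def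
  set C : ℝ := max K 1 with hC_def
  have hC1 : (1:ℝ) ≤ C := le_max_right _ _
  have hC0 : (0:ℝ) < C := lt_of_lt_of_le one_pos hC1
  have key : ∀ (x : EuclideanSpace ℝ (Fin Q)) (a : ℝ), 0 < a → (1 ≤ ‖x‖ ∨ 1 ≤ a) →
      termI Q Γ μ x a ≤ C * ((1/a) * (a ^ Γ / (1 + a + ‖x‖) ^ ((Q:ℝ) + Γ))) := by
    intro x a ha hE
    have hmeas : Measurable fun ξ : EuclideanSpace ℝ (Fin Q) =>
        ENNReal.ofReal ((4:ℝ) ^ ((Q:ℝ)+Γ)) * ENNReal.ofReal ((1 + ‖ξ‖) ^ (-((Q:ℝ)+Γ))) := by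
      apply Measurable.const_mul
      have hc : Continuous fun ξ : EuclideanSpace ℝ (Fin Q) => (1 + ‖ξ‖) ^ (-((Q:ℝ)+Γ)) :=
        (continuous_const.add continuous_norm).rpow_const
          (fun ξ => Or.inl (by show (1:ℝ) + ‖ξ‖ ≠ 0; positivity))
      exact hc.measurable.ennreal_ofReal
    have hJ : (∫⁻ ξ in {ξ : EuclideanSpace ℝ (Fin Q) | ‖ξ‖ ≤ ‖x‖/2},
        ENNReal.ofReal ((a + ‖x - ξ‖) ^ (-((Q:ℝ)+Γ))) ∂μ)
        ≤ ENNReal.ofReal ((4:ℝ) ^ ((Q:ℝ)+Γ)) * M := by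
      calc (∫⁻ ξ in {ξ : EuclideanSpace ℝ (Fin Q) | ‖ξ‖ ≤ ‖x‖/2},
          ENNReal.ofReal ((a + ‖x - ξ‖) ^ (-((Q:ℝ)+Γ))) ∂μ)
          ≤ ∫⁻ ξ in {ξ : EuclideanSpace ℝ (Fin Q) | ‖ξ‖ ≤ ‖x‖/2},
            ENNReal.ofReal ((4:ℝ) ^ ((Q:ℝ)+Γ)) * ENNReal.ofReal ((1 + ‖ξ‖) ^ (-((Q:ℝ)+Γ))) ∂μ := by
            apply setLIntegral_mono hmeas
            intro ξ hξ
            simp only [Set.mem_setOf_eq] at hξ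
            rw [← ENNReal.ofReal_mul (by positivity)]
            apply ENNReal.ofReal_le_ofReal
            have hxi : ‖x‖/2 ≤ ‖x - ξ‖ := by
              have h1 := norm_sub_norm_le x ξ
              linarith
            have hkey : 1 + ‖ξ‖ ≤ 4 * (a + ‖x - ξ‖) := by
              rcases hE with h | h
              · nlinarith [norm_nonneg ξ, norm_nonneg x]
              · nlinarith [norm_nonneg ξ, norm_nonneg x]
            have h4 : (0:ℝ) < (1 + ‖ξ‖)/4 := by positivity
            have hle : (1 + ‖ξ‖)/4 ≤ a + ‖x - ξ‖ := by linarith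
            have hmono := Real.rpow_le_rpow_of_nonpos h4 hle (neg_nonpos.mpr hp.le)
            calc (a + ‖x - ξ‖) ^ (-((Q:ℝ)+Γ)) ≤ ((1 + ‖ξ‖)/4) ^ (-((Q:ℝ)+Γ)) := hmono
              _ = 4 ^ ((Q:ℝ)+Γ) * (1 + ‖ξ‖) ^ (-((Q:ℝ)+Γ)) := by
                  rw [Real.div_rpow (by positivity) (by norm_num : (0:ℝ) ≤ 4),
                    Real.rpow_neg (by norm_num : (0:ℝ) ≤ 4), div_eq_mul_inv, inv_inv, mul_comm]
        _ = ENNReal.ofReal ((4:ℝ) ^ ((Q:ℝ)+Γ)) *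
            ∫⁻ ξ in {ξ : EuclideanSpace ℝ (Fin Q) | ‖ξ‖ ≤ ‖x‖/2},
              ENNReal.ofReal ((1 + ‖ξ‖) ^ (-((Q:ℝ)+Γ))) ∂μ :=
            lintegral_const_mul' _ _ ENNReal.ofReal_ne_top
        _ ≤ ENNReal.ofReal ((4:ℝ) ^ ((Q:ℝ)+Γ)) * M := by
            gcongr
            exact setLIntegral_le_lintegral _ _
    have hJt : (∫⁻ ξ in {ξ : EuclideanSpace ℝ (Fin Q) | ‖ξ‖ ≤ ‖x‖/2},
        ENNReal.ofReal ((a + ‖x - ξ‖) ^ (-((Q:ℝ)+Γ))) ∂μ).toReal ≤ K := by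
      have h1 : (ENNReal.ofReal ((4:ℝ) ^ ((Q:ℝ)+Γ)) * M).toReal = K := by
        rw [ENNReal.toReal_mul, ENNReal.toReal_ofReal (by positivity)]
      calc (∫⁻ ξ in {ξ : EuclideanSpace ℝ (Fin Q) | ‖ξ‖ ≤ ‖x‖/2},
            ENNReal.ofReal ((a + ‖x - ξ‖) ^ (-((Q:ℝ)+Γ))) ∂μ).toReal
          ≤ (ENNReal.ofReal ((4:ℝ) ^ ((Q:ℝ)+Γ)) * M).toReal :=
            ENNReal.toReal_mono (ENNReal.mul_ne_top ENNReal.ofReal_ne_top hM) hJ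
        _ = K := h1
    have hKC : K ≤ C := le_max_left _ _
    unfold termI
    have hrw : a ^ (Γ - 1) = a ^ Γ / a := by
      rw [Real.rpow_sub ha, Real.rpow_one]
    have hD0 : (0:ℝ) ≤ (1 + a + ‖x‖) ^ ((Q:ℝ)+Γ) :=
      Real.rpow_nonneg (by have := norm_nonneg x; linarith) _
    have h0 : 0 ≤ a ^ (Γ-1) / (1 + a + ‖x‖) ^ ((Q:ℝ)+Γ) :=
      div_nonneg (Real.rpow_nonneg ha.le _) hD0
    calc (a ^ (Γ-1) / (1 + a + ‖x‖) ^ ((Q:ℝ)+Γ)) *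
          (∫⁻ ξ in {ξ : EuclideanSpace ℝ (Fin Q) | ‖ξ‖ ≤ ‖x‖/2},
            ENNReal.ofReal ((a + ‖x - ξ‖) ^ (-((Q:ℝ)+Γ))) ∂μ).toReal
        ≤ (a ^ (Γ-1) / (1 + a + ‖x‖) ^ ((Q:ℝ)+Γ)) * K := mul_le_mul_of_nonneg_left hJt h0
      _ ≤ (a ^ (Γ-1) / (1 + a + ‖x‖) ^ ((Q:ℝ)+Γ)) * C := mul_le_mul_of_nonneg_left hKC h0
      _ = C * ((1/a) * (a ^ Γ / (1 + a + ‖x‖) ^ ((Q:ℝ)+Γ))) := by rw [hrw]; ring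
  refine ⟨⟨C, key⟩, ?_⟩
  haveI : Nonempty (Fin Q) := ⟨⟨0, hQ⟩⟩
  set B := volume (ball (0 : EuclideanSpace ℝ (Fin Q)) 1) with hB_def
  have hBne : B ≠ ⊤ := measure_ball_lt_top.ne
  refine ⟨B.toReal * C, ?_⟩
  intro α hα
  have hCα : 0 < C/α := div_pos hC0 hα
  set R : ℝ := (C/α) ^ (1/((Q:ℝ)+1)) with hR_def
  have hR0 : 0 < R := Real.rpow_pos_of_pos hCα _
  have hQne : ((Q:ℝ)+1) ≠ 0 := by positivity
  have hsub : {p : EuclideanSpace ℝ (Fin Q) × ℝ |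
      0 < p.2 ∧ (1 ≤ ‖p.1‖ ∨ 1 ≤ p.2) ∧ α < termI Q Γ μ p.1 p.2}
      ⊆ (ball (0 : EuclideanSpace ℝ (Fin Q)) R) ×ˢ (Set.Ioo 0 R) := by
    rintro ⟨x, a⟩ ⟨ha, hE, hlt⟩
    simp only at ha hE hlt
    have hxn : (0:ℝ) ≤ ‖x‖ := norm_nonneg x
    have hD : (0:ℝ) < 1 + a + ‖x‖ := by linarith
    have h1 : termI Q Γ μ x a ≤ C * ((1/a) * (a ^ Γ / (1 + a + ‖x‖) ^ ((Q:ℝ)+Γ))) :=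
      key x a ha hE
    have h2 : a ^ Γ / a = a ^ (Γ - 1) := by rw [Real.rpow_sub ha, Real.rpow_one]
    have h3 : a ^ (Γ-1) ≤ (1 + a + ‖x‖) ^ (Γ-1) :=
      Real.rpow_le_rpow ha.le (by linarith) (by linarith)
    have hDp : 0 < (1 + a + ‖x‖) ^ ((Q:ℝ)+Γ) := Real.rpow_pos_of_pos hD _
    have h4 : (1 + a + ‖x‖) ^ (Γ-1) / (1 + a + ‖x‖) ^ ((Q:ℝ)+Γ)
        = (1 + a + ‖x‖) ^ (-((Q:ℝ)+1)) := by
      rw [← Real.rpow_sub hD]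
      ring_nf
    have h5 : α < C * (1 + a + ‖x‖) ^ (-((Q:ℝ)+1)) := by
      rw [← h4]
      calc α < C * ((1/a) * (a ^ Γ / (1 + a + ‖x‖) ^ ((Q:ℝ)+Γ))) := lt_of_lt_of_le hlt h1
        _ = C * (a ^ (Γ-1) / (1 + a + ‖x‖) ^ ((Q:ℝ)+Γ)) := by rw [← h2]; ring
        _ ≤ C * ((1 + a + ‖x‖) ^ (Γ-1) / (1 + a + ‖x‖) ^ ((Q:ℝ)+Γ)) := by gcongr
    have hpow : 0 < (1 + a + ‖x‖) ^ ((Q:ℝ)+1) := Real.rpow_pos_of_pos hD _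
    have h6 : (1 + a + ‖x‖) ^ ((Q:ℝ)+1) < C/α := by
      rw [Real.rpow_neg hD.le, ← div_eq_mul_inv] at h5
      have h5' : α * (1 + a + ‖x‖) ^ ((Q:ℝ)+1) < C := (lt_div_iff₀ hpow).1 h5
      rw [lt_div_iff₀ hα]
      linarith [h5']
    have h7 : (1 + a + ‖x‖) < R := by
      have hh := Real.rpow_lt_rpow hpow.le h6 (by positivity : (0:ℝ) < 1/((Q:ℝ)+1))
      rw [one_div, Real.rpow_rpow_inv hD.le hQne] at hh
      rw [hR_def, one_div]
      exact hh
    constructor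
    · rw [mem_ball_zero_iff]
      linarith
    · exact ⟨ha, by linarith⟩
  calc volume {p : EuclideanSpace ℝ (Fin Q) × ℝ |
        0 < p.2 ∧ (1 ≤ ‖p.1‖ ∨ 1 ≤ p.2) ∧ α < termI Q Γ μ p.1 p.2}
      ≤ volume ((ball (0 : EuclideanSpace ℝ (Fin Q)) R) ×ˢ (Set.Ioo 0 R)) :=
        measure_mono hsub
    _ = volume (ball (0 : EuclideanSpace ℝ (Fin Q)) R) * volume (Set.Ioo (0:ℝ) R) := by
        rw [Measure.volume_eq_prod, Measure.prod_prod]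
    _ = (ENNReal.ofReal (R ^ Q) * B) * ENNReal.ofReal R := by
        rw [Real.volume_Ioo, Measure.addHaar_ball _ _ hR0.le, finrank_euclideanSpace_fin]
        norm_num
        rw [hB_def]
    _ = B * ENNReal.ofReal (R ^ Q * R) := by
        rw [ENNReal.ofReal_mul (by positivity)]
        ring
    _ = B * ENNReal.ofReal (C/α) := by
        congr 1
        rw [← pow_succ, ← Real.rpow_natCast R (Q+1)]
        push_cast
        rw [hR_def, one_div, Real.rpow_inv_rpow hCα.le hQne]
    _ = ENNReal.ofReal (B.toReal * C / α) := by
        rw [mul_div_assoc, ENNReal.ofReal_mul ENNReal.toReal_nonneg,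
          ENNReal.ofReal_toReal hBne]
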